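/- Let H be a Hadamard matrix of order n > 4 and let s be an odd integer with s > 1 dividing n. Then every x ∈ Λ^H_s having at least one entry not divisible by s has Lee weight modulo s strictly greater than s, and there exists such an x whose Lee weight modulo s is at most n/2. (That is, the minimum Lee distance of the code C^H_s over ℤ_s obtained by reducing Λ^H_s modulo s is greater than s and at most n/2.) -/

import Mathlib

open Matrix


/-- A Hadamard matrix of order `n`: entries in `{1, -1}` and `H * Hᵀ = n • 1`. -/
def IsHadamard (n : ℕ) (H : Matrix (Fin n) (Fin n) ℤ) : Prop :=
  (∀ i j, H i j = 1 ∨ H i j = -1) ∧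
  H * H.transpose = (n : ℤ) • (1 : Matrix (Fin n) (Fin n) ℤ)

/-- `Λ^W_s`: the set of `x ∈ ℤⁿ` such that `s` divides every entry of `W · x`. -/
def LambdaWs {n : ℕ} (W : Matrix (Fin n) (Fin n) ℤ) (s : ℕ) : Set (Fin n → ℤ) :=
  { x | ∀ i, (s : ℤ) ∣ W.mulVec x i }

/-- The Lee weight modulo `s` of `x ∈ ℤⁿ`: `Σᵢ min(xᵢ mod s, s − (xᵢ mod s))`. -/
def leeWeight {n : ℕ} (s : ℕ) (x : Fin n → ℤ) : ℤ :=
  ∑ i, min (x i % (s : ℤ)) ((s : ℤ) - x i % (s : ℤ))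

lemma had_key {n : ℕ} (H : Matrix (Fin n) (Fin n) ℤ) (hH : IsHadamard n H) (i j : Fin n) :
    ∑ k, H i k * H j k = if i = j then (n : ℤ) else 0 := by
  have := congrFun (congrFun hH.2 i) j
  simpa [Matrix.mul_apply, Matrix.one_apply, Matrix.smul_apply, mul_ite] using this

lemma had_keyT {n : ℕ} (H : Matrix (Fin n) (Fin n) ℤ) (hH : IsHadamard n H) (hn : 0 < n)
    (k l : Fin n) : ∑ i, H i k * H i l = if k = l then (n : ℤ) else 0 := by
  classical
  set A : Matrix (Fin n) (Fin n) ℚ := H.map (Int.cast) with hA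
  have h1 : A * Aᵀ = (n : ℚ) • 1 := by
    ext i j
    have h := congrArg (Int.cast : ℤ → ℚ) (had_key H hH i j)
    push_cast at h
    simpa [hA, Matrix.mul_apply, Matrix.smul_apply, Matrix.one_apply,
      apply_ite (Int.cast : ℤ → ℚ)] using h
  have hn' : (n : ℚ) ≠ 0 := by positivity
  have h2 : A * ((n:ℚ)⁻¹ • Aᵀ) = 1 := by
    rw [Matrix.mul_smul, h1, smul_smul, inv_mul_cancel₀ hn', one_smul]
  have h3 : ((n:ℚ)⁻¹ • Aᵀ) * A = 1 := mul_eq_one_comm.mp h2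
  have h4 : Aᵀ * A = (n:ℚ) • 1 := by
    rw [Matrix.smul_mul] at h3
    calc Aᵀ * A = (n:ℚ) • ((n:ℚ)⁻¹ • (Aᵀ * A)) := by
          rw [smul_smul, mul_inv_cancel₀ hn', one_smul]
      _ = (n:ℚ) • 1 := by rw [h3]
  have h5 := congrFun (congrFun h4 k) l
  simp only [hA, Matrix.mul_apply, Matrix.transpose_apply, Matrix.map_apply,
    Matrix.smul_apply, Matrix.one_apply, smul_eq_mul] at h5
  have h6 : ((∑ i, H i k * H i l : ℤ) : ℚ) = ((if k = l then (n:ℤ) else 0 : ℤ) : ℚ) := by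
    push_cast
    simpa [apply_ite (Int.cast : ℤ → ℚ)] using h5
  exact_mod_cast h6

/-- Let `H` be a Hadamard matrix of order `n > 4` and `s > 1` an odd divisor of
`n`. Then every `x ∈ Λ^H_s` with an entry not divisible by `s` has Lee weight
modulo `s` strictly greater than `s`, and some such `x` has Lee weight modulo
`s` at most `n/2`. -/
theorem min_lee_distance_hadamard_odd
    (n s : ℕ) (H : Matrix (Fin n) (Fin n) ℤ) (hH : IsHadamard n H)
    (hn : 4 < n) (hs : 1 < s) (hso : Odd s) (hsd : s ∣ n) :
    (∀ x ∈ LambdaWs H s, (∃ i, ¬ (s : ℤ) ∣ x i) → (s : ℤ) < leeWeight s x) ∧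
    (∃ x ∈ LambdaWs H s, (∃ i, ¬ (s : ℤ) ∣ x i) ∧ leeWeight s x ≤ ((n / 2 : ℕ) : ℤ)) := by
  classical
  have hn0 : 0 < n := by omega
  have hsz : (0:ℤ) < (s:ℤ) := by exact_mod_cast Nat.lt_of_lt_of_le Nat.zero_lt_one hs.le
  have hs2 : (1:ℤ) < (s:ℤ) := by exact_mod_cast hs
  constructor
  · -- lower bound
    intro x hx hxi
    set r : Fin n → ℤ := fun i => x i % (s:ℤ) with hrdef
    set y : Fin n → ℤ := fun i => if 2 * r i < (s:ℤ) then r i else r i - s with hydef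
    have hr0 : ∀ i, 0 ≤ r i := fun i => Int.emod_nonneg _ (ne_of_gt hsz)
    have hrs : ∀ i, r i < (s:ℤ) := fun i => Int.emod_lt_of_pos _ hsz
    have hrne : ∀ i, 2 * r i ≠ (s:ℤ) := by
      intro i h
      obtain ⟨m, hm⟩ := hso
      omega
    have hxr : ∀ i, (s:ℤ) ∣ x i - r i := fun i => Int.dvd_self_sub_of_emod_eq rfl
    have hxy : ∀ i, (s:ℤ) ∣ x i - y i := by
      intro i
      simp only [hydef]
      split
      · exact hxr i
      · have : x i - (r i - s) = (x i - r i) + s := by ring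
        rw [this]
        exact dvd_add (hxr i) ⟨1, (mul_one _).symm⟩
    have habs : ∀ i, min (r i) ((s:ℤ) - r i) = |y i| := by
      intro i
      simp only [hydef]
      split_ifs with h
      · rw [abs_of_nonneg (hr0 i)]
        exact min_eq_left (by linarith)
      · push_neg at h
        have h2 : (s:ℤ) < 2 * r i := lt_of_le_of_ne h (Ne.symm (hrne i))
        have hrsi := hrs i
        rw [abs_of_nonpos (by linarith)]
        have : -(r i - s) = (s:ℤ) - r i := by ring
        rw [this]
        exact min_eq_right (by linarith)
    have h2y : ∀ i, 2 * |y i| < (s:ℤ) := by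
      intro i
      simp only [hydef]
      split_ifs with h
      · rwa [abs_of_nonneg (hr0 i)]
      · push_neg at h
        have h2 : (s:ℤ) < 2 * r i := lt_of_le_of_ne h (Ne.symm (hrne i))
        have hrsi := hrs i
        rw [abs_of_nonpos (by linarith)]
        linarith
    have hlee : leeWeight s x = ∑ i, |y i| := by
      unfold leeWeight
      exact Finset.sum_congr rfl fun i _ => habs i
    set w : ℤ := ∑ i, |y i| with hwdef
    rw [hlee]
    by_contra hcon
    push_neg at hcon
    -- hcon : w ≤ s
    have hHyd : ∀ i, (s:ℤ) ∣ H.mulVec y i := by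
      intro i
      have hd : H.mulVec x i - H.mulVec y i = ∑ k, H i k * (x k - y k) := by
        simp only [Matrix.mulVec, dotProduct]
        rw [← Finset.sum_sub_distrib]
        exact Finset.sum_congr rfl fun k _ => by ring
      have hds : (s:ℤ) ∣ ∑ k, H i k * (x k - y k) :=
        Finset.dvd_sum fun k _ => Dvd.dvd.mul_left (hxy k) _
      have h2 : H.mulVec y i = H.mulVec x i - ∑ k, H i k * (x k - y k) := by
        rw [← hd]; ring
      rw [h2]
      exact dvd_sub (hx i) hds
    have htri : ∀ i, |H.mulVec y i| ≤ w := by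
      intro i
      calc |H.mulVec y i| = |∑ k, H i k * y k| := by rfl
        _ ≤ ∑ k, |H i k * y k| := Finset.abs_sum_le_sum_abs _ _
        _ = ∑ k, |y k| := Finset.sum_congr rfl fun k _ => by
            rcases hH.1 i k with h | h <;> rw [h] <;> simp
    -- key identity: n * y k = ∑ i, H i k * H.mulVec y i
    have hid : ∀ k, (n:ℤ) * y k = ∑ i, H i k * H.mulVec y i := by
      intro k
      have : ∑ i, H i k * H.mulVec y i = ∑ i, ∑ l, (H i k * H i l) * y l := by
        refine Finset.sum_congr rfl fun i _ => ?_
        simp only [Matrix.mulVec, dotProduct, Finset.mul_sum]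
        exact Finset.sum_congr rfl fun l _ => by ring
      rw [this, Finset.sum_comm]
      have : ∀ l, ∑ i, (H i k * H i l) * y l = (if k = l then (n:ℤ) else 0) * y l := by
        intro l
        rw [← Finset.sum_mul, had_keyT H hH hn0]
      rw [Finset.sum_congr rfl fun l _ => this l]
      simp [mul_comm]
    obtain ⟨i0, hi0⟩ := hxi
    have hyne : y i0 ≠ 0 := by
      intro hz
      apply hi0
      have := hxy i0
      rw [hz, sub_zero] at this
      exact this
    rcases lt_or_eq_of_le hcon with hlt | heq
    · -- w < s : then Hy = 0, so y = 0, contradiction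
      have hz : ∀ i, H.mulVec y i = 0 := by
        intro i
        by_contra hne
        have h1 : (s:ℤ) ≤ |H.mulVec y i| :=
          Int.le_of_dvd (abs_pos.mpr hne) ((dvd_abs _ _).mpr (hHyd i))
        exact absurd ((htri i).trans_lt hlt) (not_lt.mpr h1)
      have := hid i0
      rw [Finset.sum_congr rfl (fun i _ => by rw [hz i, mul_zero])] at this
      simp at this
      rcases this with h | h
      · exact absurd h (by exact_mod_cast hn0.ne')
      · exact hyne h
    · -- w = s : parity argument
      have hpar : ∀ i, ((H.mulVec y i : ℤ) : ZMod 2) = 1 := by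
        intro i
        have h1 : ((H.mulVec y i : ℤ) : ZMod 2) = ∑ k, ((H i k : ℤ) : ZMod 2) * ((y k : ℤ) : ZMod 2) := by
          simp only [Matrix.mulVec, dotProduct]
          push_cast
          rfl
        rw [h1]
        have h2 : ∀ k, ((H i k : ℤ) : ZMod 2) = 1 := by
          intro k
          have hneg : ((-1 : ℤ) : ZMod 2) = 1 := by decide
          rcases hH.1 i k with h | h <;> rw [h] <;> simp [hneg]
        rw [Finset.sum_congr rfl fun k _ => by rw [h2 k, one_mul]]
        have h3 : ∀ k, ((y k : ℤ) : ZMod 2) = ((|y k| : ℤ) : ZMod 2) := by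
          intro k
          have hneg : ∀ a : ZMod 2, -a = a := by decide
          rcases abs_choice (y k) with h | h <;> rw [h]
          push_cast
          rw [hneg]
        rw [Finset.sum_congr rfl fun k _ => h3 k, ← Int.cast_sum, ← hwdef, heq]
        obtain ⟨m, hm⟩ := hso
        have : ((s:ℤ) : ZMod 2) = ((s : ℕ) : ZMod 2) := by push_cast; ring
        rw [this, hm, Nat.cast_add, Nat.cast_mul, ZMod.natCast_self, zero_mul,
          zero_add, Nat.cast_one]
      have hne0 : ∀ i, H.mulVec y i ≠ 0 := by
        intro i h
        have := hpar i
        rw [h] at this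
        exact one_ne_zero this.symm
      have hsq : ∀ i, (s:ℤ)^2 ≤ (H.mulVec y i)^2 := by
        intro i
        have h1 : (s:ℤ) ≤ |H.mulVec y i| :=
          Int.le_of_dvd (abs_pos.mpr (hne0 i)) ((dvd_abs _ _).mpr (hHyd i))
        calc (s:ℤ)^2 ≤ |H.mulVec y i|^2 := by nlinarith [abs_nonneg (H.mulVec y i)]
          _ = (H.mulVec y i)^2 := sq_abs _
      have hquad : ∑ i, (H.mulVec y i)^2 = (n:ℤ) * ∑ k, (y k)^2 := by
        have e1 : ∀ i, (H.mulVec y i)^2 = ∑ k, ∑ l, (H i k * H i l) * (y k * y l) := by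
          intro i
          simp only [Matrix.mulVec, dotProduct, sq, Finset.sum_mul_sum]
          exact Finset.sum_congr rfl fun k _ => Finset.sum_congr rfl fun l _ => by ring
        calc ∑ i, (H.mulVec y i)^2
            = ∑ i, ∑ k, ∑ l, (H i k * H i l) * (y k * y l) :=
              Finset.sum_congr rfl fun i _ => e1 i
          _ = ∑ k, ∑ l, ∑ i, (H i k * H i l) * (y k * y l) := by
              rw [Finset.sum_comm]
              refine Finset.sum_congr rfl fun k _ => ?_
              rw [Finset.sum_comm]
          _ = ∑ k, ∑ l, (if k = l then (n:ℤ) else 0) * (y k * y l) := by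
              refine Finset.sum_congr rfl fun k _ => Finset.sum_congr rfl fun l _ => ?_
              rw [← Finset.sum_mul, had_keyT H hH hn0]
          _ = ∑ k, (n:ℤ) * (y k)^2 := by
              refine Finset.sum_congr rfl fun k _ => ?_
              simp [Finset.sum_ite_eq, sq]
          _ = (n:ℤ) * ∑ k, (y k)^2 := by rw [Finset.mul_sum]
      have hlb : (n:ℤ) * (s:ℤ)^2 ≤ ∑ i, (H.mulVec y i)^2 := by
        calc (n:ℤ) * (s:ℤ)^2 = ∑ _i : Fin n, (s:ℤ)^2 := by
              simp [Finset.sum_const, mul_comm]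
          _ ≤ ∑ i, (H.mulVec y i)^2 := Finset.sum_le_sum fun i _ => hsq i
      have hub : 2 * ∑ k, (y k)^2 ≤ ((s:ℤ) - 1) * w := by
        rw [hwdef, Finset.mul_sum, Finset.mul_sum]
        refine Finset.sum_le_sum fun k _ => ?_
        have h1 : 2 * |y k| ≤ (s:ℤ) - 1 := by linarith [h2y k]
        have h2 : (y k)^2 = |y k|^2 := (sq_abs (y k)).symm
        nlinarith [abs_nonneg (y k)]
      rw [hquad] at hlb
      have hss : (s:ℤ)^2 ≤ ∑ k, (y k)^2 := by
        have := (mul_le_mul_iff_right₀ (show (0:ℤ) < n by exact_mod_cast hn0)).mp hlb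
        exact this
      rw [heq] at hub
      nlinarith
  · -- upper bound construction
    obtain ⟨m, hm⟩ := hso
    set i0 : Fin n := ⟨0, by omega⟩ with hi0def
    set i1 : Fin n := ⟨1, by omega⟩ with hi1def
    have hne : i0 ≠ i1 := by simp [hi0def, hi1def, Fin.ext_iff]
    set x : Fin n → ℤ := fun k => ((m:ℤ)+1) * (H i0 k + H i1 k) with hxdef
    have hsum : ∑ k, H i0 k * H i1 k = 0 := by
      have := had_key H hH i0 i1
      simp only [if_neg hne] at this
      exact this
    have hmem : x ∈ LambdaWs H s := by
      intro i
      have hmv : H.mulVec x i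
          = ((m:ℤ)+1) * ((∑ k, H i k * H i0 k) + (∑ k, H i k * H i1 k)) := by
        simp only [Matrix.mulVec, dotProduct, hxdef, Finset.mul_sum,
          ← Finset.sum_add_distrib]
        refine Finset.sum_congr rfl fun k _ => by ring
      rw [hmv, had_key H hH i i0, had_key H hH i i1]
      obtain ⟨c, hc⟩ := hsd
      have hdn : (s:ℤ) ∣ (n:ℤ) := ⟨(c:ℤ), by exact_mod_cast hc⟩
      refine Dvd.dvd.mul_left (dvd_add ?_ ?_) _ <;> split <;> simp [hdn]
    have hsval : ((s:ℕ):ℤ) = 2*(m:ℤ)+1 := by exact_mod_cast hm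
    have hxval : ∀ k, (H i0 k = H i1 k ∧ (x k = (s:ℤ)+1 ∨ x k = -((s:ℤ)+1)))
        ∨ (H i0 k ≠ H i1 k ∧ x k = 0) := by
      intro k
      have hxk : x k = ((m:ℤ)+1) * (H i0 k + H i1 k) := by rw [hxdef]
      rcases hH.1 i0 k with h0 | h0 <;> rcases hH.1 i1 k with h1 | h1
      · exact Or.inl ⟨h0.trans h1.symm,
          Or.inl (by rw [hxk, h0, h1, hsval]; ring)⟩
      · exact Or.inr ⟨by rw [h0, h1]; norm_num,
          by rw [hxk, h0, h1]; ring⟩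
      · exact Or.inr ⟨by rw [h0, h1]; norm_num,
          by rw [hxk, h0, h1]; ring⟩
      · exact Or.inl ⟨h0.trans h1.symm,
          Or.inr (by rw [hxk, h0, h1, hsval]; ring)⟩
    have hagree : ∃ k, H i0 k = H i1 k := by
      by_contra hall
      push_neg at hall
      have : ∀ k, H i0 k * H i1 k = -1 := by
        intro k
        have h := hall k
        rcases hH.1 i0 k with h0 | h0 <;> rcases hH.1 i1 k with h1 | h1 <;>
          first | exact absurd (h0.trans h1.symm) h | (rw [h0, h1]; norm_num)
      rw [Finset.sum_congr rfl fun k _ => this k] at hsum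
      simp at hsum
      omega
    obtain ⟨k0, hk0⟩ := hagree
    have hndvd : ¬ (s:ℤ) ∣ x k0 := by
      rcases hxval k0 with ⟨_, hv | hv⟩ | ⟨hd, _⟩
      · rw [hv]
        intro hdvd
        have h1 : (s:ℤ) ∣ 1 := by
          have := dvd_sub hdvd (dvd_refl (s:ℤ))
          simpa using this
        have := Int.le_of_dvd one_pos h1
        omega
      · rw [hv]
        intro hdvd
        rw [dvd_neg] at hdvd
        have h1 : (s:ℤ) ∣ 1 := by
          have := dvd_sub hdvd (dvd_refl (s:ℤ))
          simpa using this
        have := Int.le_of_dvd one_pos h1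
        omega
      · exact absurd hk0 hd
    -- compute lee weight
    have hmod1 : ((s:ℤ)+1) % (s:ℤ) = 1 := by
      have e : ((s:ℤ)+1) = 1 + 1*(s:ℤ) := by ring
      rw [e, Int.add_mul_emod_self_right]
      exact Int.emod_eq_of_lt (by norm_num) hs2
    have hmod2 : (-((s:ℤ)+1)) % (s:ℤ) = (s:ℤ) - 1 := by
      have e : (-((s:ℤ)+1)) = ((s:ℤ) - 1) + (-2)*(s:ℤ) := by ring
      rw [e, Int.add_mul_emod_self_right]
      exact Int.emod_eq_of_lt (by linarith) (by linarith)
    have hterm : ∀ k, min (x k % (s:ℤ)) ((s:ℤ) - x k % (s:ℤ))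
        = if H i0 k = H i1 k then (1:ℤ) else 0 := by
      intro k
      rcases hxval k with ⟨ha, hv | hv⟩ | ⟨hd, hv⟩
      · rw [hv, hmod1, if_pos ha]
        exact min_eq_left (by linarith)
      · rw [hv, hmod2, if_pos ha]
        have : (s:ℤ) - ((s:ℤ) - 1) = 1 := by ring
        rw [this]
        exact min_eq_right (by linarith)
      · rw [hv, if_neg hd]
        simp
    have hlw : leeWeight s x
        = ∑ k, (if H i0 k = H i1 k then (1:ℤ) else 0) := by
      unfold leeWeight
      exact Finset.sum_congr rfl fun k _ => hterm k
    set A : ℕ := (Finset.univ.filter (fun k => H i0 k = H i1 k)).card with hAdef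
    have hsA : ∑ k, (if H i0 k = H i1 k then (1:ℤ) else 0) = (A:ℤ) := by
      rw [Finset.sum_boole, hAdef]
    have h2A : 2 * (A:ℤ) = (n:ℤ) := by
      have e : ∀ k, H i0 k * H i1 k
          = 2*(if H i0 k = H i1 k then (1:ℤ) else 0) - 1 := by
        intro k
        rcases hH.1 i0 k with h0 | h0 <;> rcases hH.1 i1 k with h1 | h1 <;>
          simp [h0, h1]
      rw [Finset.sum_congr rfl fun k _ => e k] at hsum
      rw [Finset.sum_sub_distrib, ← Finset.mul_sum, hsA] at hsum
      simp at hsum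
      linarith
    have hAle : (A:ℤ) ≤ ((n/2 : ℕ) : ℤ) := by
      have h2A' : 2 * A = n := by exact_mod_cast h2A
      have : A = n / 2 := by omega
      omega
    exact ⟨x, hmem, ⟨k0, hndvd⟩, by rw [hlw, hsA]; exact hAle⟩
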